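/- For the quartic gBBM phase, the points (η₁,η₂,η₃;ξ) = (ξ/4, ξ/4, ξ/4; ξ) and (ξ/2, ξ/2, ξ/2; ξ) are space resonances for every ξ ∈ ℝ (i.e., ∇_{η₁,η₂,η₃}φ = 0 there), and the phase φ vanishes at these points if and only if ξ = 0. -/

import Mathlib

noncomputable def ω : ℝ → ℝ := fun ξ => ξ / (1 + ξ^2)

noncomputable def φ (η₁ η₂ η₃ ξ : ℝ) : ℝ :=
  -ω ξ + ω η₁ + ω η₂ + ω η₃ + ω (ξ - η₁ - η₂ - η₃)

lemma denom_pos (x : ℝ) : (0:ℝ) < 1 + x^2 := by positivity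

lemma hω (x : ℝ) : HasDerivAt ω ((1 - x^2) / (1 + x^2)^2) x := by
  have h : HasDerivAt (fun t : ℝ => t / (1 + t^2))
      ((1 * (1 + x^2) - x * (2 * x)) / (1 + x^2)^2) x := by
    exact (hasDerivAt_id x).div (by
      simpa using ((hasDerivAt_pow 2 x).const_add 1)) (denom_pos x).ne'
  rw [show ω = fun t : ℝ => t / (1 + t^2) from rfl]
  convert h using 1
  ring

lemma key (ξ a x : ℝ) (h : (ξ - x - a - a)^2 = x^2) :
    deriv (fun t => φ t a a ξ) x = 0 := by
  have hg : HasDerivAt (fun t : ℝ => ξ - t - a - a) (-1) x := by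
    simpa using (((hasDerivAt_id x).const_sub ξ).sub_const a).sub_const a
  have h1 : HasDerivAt (fun t => φ t a a ξ)
      ((1 - x^2)/(1 + x^2)^2 + ((1 - (ξ - x - a - a)^2)/(1 + (ξ - x - a - a)^2)^2) * (-1)) x := by
    have h2 := (hω (ξ - x - a - a)).comp x hg
    exact ((((hω x).const_add (-ω ξ)).add_const (ω a)).add_const (ω a)).add
      h2
  rw [h1.deriv, h]
  ring

lemma swap2 (ξ a : ℝ) : (fun t => φ a t a ξ) = (fun t => φ t a a ξ) := by
  funext t
  simp only [φ]
  ring_nf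

lemma swap3 (ξ a : ℝ) : (fun t => φ a a t ξ) = (fun t => φ t a a ξ) := by
  funext t
  simp only [φ]
  ring_nf

theorem bbm_diagonal_space_resonances :
    ∀ ξ : ℝ,
      (deriv (fun t => φ t (ξ/4) (ξ/4) ξ) (ξ/4) = 0 ∧
       deriv (fun t => φ (ξ/4) t (ξ/4) ξ) (ξ/4) = 0 ∧
       deriv (fun t => φ (ξ/4) (ξ/4) t ξ) (ξ/4) = 0) ∧
      (deriv (fun t => φ t (ξ/2) (ξ/2) ξ) (ξ/2) = 0 ∧
       deriv (fun t => φ (ξ/2) t (ξ/2) ξ) (ξ/2) = 0 ∧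
       deriv (fun t => φ (ξ/2) (ξ/2) t ξ) (ξ/2) = 0) ∧
      (φ (ξ/4) (ξ/4) (ξ/4) ξ = 0 ↔ ξ = 0) ∧
      (φ (ξ/2) (ξ/2) (ξ/2) ξ = 0 ↔ ξ = 0) := by
  intro ξ
  have k4 : deriv (fun t => φ t (ξ/4) (ξ/4) ξ) (ξ/4) = 0 := key ξ (ξ/4) (ξ/4) (by ring)
  have k2 : deriv (fun t => φ t (ξ/2) (ξ/2) ξ) (ξ/2) = 0 := key ξ (ξ/2) (ξ/2) (by ring)
  have e4 : φ (ξ/4) (ξ/4) (ξ/4) ξ = (15/16)*ξ^3 / ((1+(ξ/4)^2)*(1+ξ^2)) := by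
    simp only [φ, ω]
    have h1 := (denom_pos ξ).ne'
    have h2 := (denom_pos (ξ/4)).ne'
    have h3 : ξ - ξ/4 - ξ/4 - ξ/4 = ξ/4 := by ring
    rw [h3]
    field_simp
    ring
  have e2 : φ (ξ/2) (ξ/2) (ξ/2) ξ = (3/4)*ξ^3 / ((1+(ξ/2)^2)*(1+ξ^2)) := by
    simp only [φ, ω]
    have h1 := (denom_pos ξ).ne'
    have h2 := (denom_pos (ξ/2)).ne'
    have h3 : ξ - ξ/2 - ξ/2 - ξ/2 = -(ξ/2) := by ring
    rw [h3]
    field_simp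
    ring
  have cube : ∀ c : ℝ, c ≠ 0 → ∀ D : ℝ, 0 < D → (c*ξ^3 / D = 0 ↔ ξ = 0) := by
    intro c hc D hD
    rw [div_eq_zero_iff]
    constructor
    · rintro (h | h)
      · rcases mul_eq_zero.mp h with h | h
        · exact absurd h hc
        · exact pow_eq_zero_iff (by norm_num) |>.mp h
      · exact absurd h hD.ne'
    · intro h; left; rw [h]; ring
  refine ⟨⟨k4, ?_, ?_⟩, ⟨k2, ?_, ?_⟩, ?_, ?_⟩
  · rw [swap2]; exact k4
  · rw [swap3]; exact k4
  · rw [swap2]; exact k2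
  · rw [swap3]; exact k2
  · rw [e4]; exact cube (15/16) (by norm_num) _ (by positivity)
  · rw [e2]; exact cube (3/4) (by norm_num) _ (by positivity)
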